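/- Under the identity A S - S A* = i Π Π* with S = S* invertible and c ∈ ℝ not an eigenvalue of A, one has S^{-1} Π w_A(c) = (A* - c I_n) S^{-1} (A - c I_n)^{-1} Π, where w_A(c) = I_m - i Π* S^{-1} (A - c I_n)^{-1} Π. -/
import Mathlib


open Matrix

/-- Under `A S - S A* = i P P*` with `S = S*` invertible and real `c ∉ σ(A)`,
`S⁻¹ P w_A(c) = (A* - cI) S⁻¹ (A - cI)⁻¹ P`. -/
theorem stmt2 {n m : ℕ} (A S : Matrix (Fin n) (Fin n) ℂ) (P : Matrix (Fin n) (Fin m) ℂ)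
    (c : ℝ)
    (hSherm : S.IsHermitian) (hSinv : IsUnit S.det)
    (hc : IsUnit (A - (c : ℂ) • (1 : Matrix (Fin n) (Fin n) ℂ)).det)
    (hid : A * S - S * Aᴴ = Complex.I • (P * Pᴴ)) :
    S⁻¹ * P * ((1 : Matrix (Fin m) (Fin m) ℂ) -
        Complex.I • (Pᴴ * S⁻¹ * (A - (c : ℂ) • 1)⁻¹ * P))
      = (Aᴴ - (c : ℂ) • 1) * S⁻¹ * (A - (c : ℂ) • 1)⁻¹ * P := by
  set B : Matrix (Fin n) (Fin n) ℂ := A - (c : ℂ) • 1 with hB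
  have hS1 : S * S⁻¹ = 1 := Matrix.mul_nonsing_inv _ hSinv
  have hS2 : S⁻¹ * S = 1 := Matrix.nonsing_inv_mul _ hSinv
  have hB1 : B * B⁻¹ = 1 := Matrix.mul_nonsing_inv _ hc
  have hid' : Complex.I • (P * Pᴴ) = B * S - S * (Aᴴ - (c : ℂ) • 1) := by
    rw [← hid, hB]
    simp only [sub_mul, mul_sub, smul_mul_assoc, mul_smul_comm, one_mul, mul_one]
    abel
  have key : S⁻¹ * P * (Complex.I • (Pᴴ * S⁻¹ * B⁻¹ * P))
      = S⁻¹ * (Complex.I • (P * Pᴴ)) * (S⁻¹ * (B⁻¹ * P)) := by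
    simp only [Matrix.mul_smul, Matrix.smul_mul]
    congr 1
    simp only [Matrix.mul_assoc]
  rw [Matrix.mul_sub, Matrix.mul_one, key, hid']
  have expand : S⁻¹ * (B * S - S * (Aᴴ - (c : ℂ) • 1)) * (S⁻¹ * (B⁻¹ * P))
      = S⁻¹ * P - (Aᴴ - (c : ℂ) • 1) * S⁻¹ * (B⁻¹ * P) := by
    rw [Matrix.mul_sub, Matrix.sub_mul]
    have h1 : S⁻¹ * (B * S) * (S⁻¹ * (B⁻¹ * P)) = S⁻¹ * P := by
      calc S⁻¹ * (B * S) * (S⁻¹ * (B⁻¹ * P))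
          = S⁻¹ * (B * ((S * S⁻¹) * (B⁻¹ * P))) := by simp only [Matrix.mul_assoc]
        _ = S⁻¹ * ((B * B⁻¹) * P) := by rw [hS1]; simp only [Matrix.one_mul, Matrix.mul_assoc]
        _ = S⁻¹ * P := by rw [hB1, Matrix.one_mul]
    have h2 : S⁻¹ * (S * (Aᴴ - (c : ℂ) • 1)) * (S⁻¹ * (B⁻¹ * P))
        = (Aᴴ - (c : ℂ) • 1) * S⁻¹ * (B⁻¹ * P) := by
      rw [← mul_assoc S⁻¹ S, hS2, one_mul, Matrix.mul_assoc]
    rw [h1, h2]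
  rw [expand, sub_sub_cancel]; simp only [Matrix.mul_assoc]
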